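/- Let E, Z be Banach spaces, K ⊆ Z a closed convex cone, X ⊆ E a compact convex set, f : X → ℝ convex and lower semicontinuous, and g : X → Z K-convex and continuous. Then the feasible set A := { z ∈ Z : ∃ x ∈ X, g(x) ⪯_K z } is closed, A equals the effective domain of the perturbation function v(z) := inf{ f(x) : x ∈ X, g(x) ⪯_K z }, and v is lower semicontinuous on Z. -/
import Mathlib

open Set Filter Topology Pointwise

lemma sublevel_compact {α : Type*} [TopologicalSpace α] {X : Set α}
    (hXcomp : IsCompact X) {f : α → ℝ} (hflsc : LowerSemicontinuousOn f X) (r : ℝ) :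
    IsCompact {x ∈ X | f x ≤ r} := by
  rw [isCompact_iff_ultrafilter_le_nhds]
  intro F hF
  have hFX : ↑F ≤ 𝓟 X := hF.trans (principal_mono.2 (fun x hx => hx.1))
  obtain ⟨x, hxX, hxF⟩ := (isCompact_iff_ultrafilter_le_nhds.1 hXcomp) F hFX
  refine ⟨x, ⟨hxX, ?_⟩, hxF⟩
  by_contra h
  push_neg at h
  have hnw : ↑F ≤ 𝓝[X] x := le_inf hxF hFX
  have h1 : {x' | r < f x'} ∈ (F : Filter α) := hnw (hflsc x hxX r h)
  have h2 : {x' ∈ X | f x' ≤ r} ∈ (F : Filter α) := hF (mem_principal_self _)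
  have := F.neBot.1
  obtain ⟨y, hy1, hy2⟩ := Filter.nonempty_of_mem (inter_mem h1 h2)
  exact absurd hy2.2 (not_le.2 hy1)

/-- with `X` compact, `f` lsc and `g` continuous, the feasible set
`A` is closed, equals the effective domain of `v`, and `v` is lower semicontinuous. -/
theorem stmt_1
    {E Z : Type*} [NormedAddCommGroup E] [NormedSpace ℝ E] [CompleteSpace E]
    [NormedAddCommGroup Z] [NormedSpace ℝ Z] [CompleteSpace Z]
    (K : Set Z) (hKclosed : IsClosed K) (hKconv : Convex ℝ K)
    (hKcone : ∀ c : ℝ, 0 ≤ c → ∀ z ∈ K, c • z ∈ K)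
    (X : Set E) (hX : Convex ℝ X) (hXcomp : IsCompact X)
    (f : E → ℝ) (hf : ConvexOn ℝ X f) (hflsc : LowerSemicontinuousOn f X)
    (g : E → Z) (hgcont : ContinuousOn g X)
    (hg : ∀ x₁ ∈ X, ∀ x₂ ∈ X, ∀ t ∈ Set.Icc (0:ℝ) 1,
      t • g x₁ + (1 - t) • g x₂ - g (t • x₁ + (1 - t) • x₂) ∈ K)
    (v : Z → EReal)
    (hv : ∀ z, v z = sInf ((fun x => (f x : EReal)) '' {x | x ∈ X ∧ z - g x ∈ K}))
    (A : Set Z) (hA : A = {z | ∃ x ∈ X, z - g x ∈ K}) :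
    IsClosed A ∧ A = {z | v z < ⊤} ∧ LowerSemicontinuous v := by
  -- description of A as a sum
  have hAsum : A = g '' X + K := by
    rw [hA]
    ext z
    constructor
    · rintro ⟨x, hxX, hxK⟩
      exact ⟨g x, ⟨x, hxX, rfl⟩, z - g x, hxK, by module⟩
    · rintro ⟨w, ⟨x, hxX, rfl⟩, k, hk, rfl⟩
      exact ⟨x, hxX, by simpa using hk⟩
  have hAclosed : IsClosed A := by
    rw [hAsum]
    exact IsClosed.add_left_of_isCompact hKclosed (hXcomp.image_of_continuousOn hgcont)
  refine ⟨hAclosed, ?_, ?_⟩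
  · -- A = effective domain
    ext z
    rw [hA]
    simp only [Set.mem_setOf_eq]
    rw [hv z]
    constructor
    · rintro ⟨x, hxX, hxK⟩
      exact lt_of_le_of_lt (sInf_le ⟨x, ⟨hxX, hxK⟩, rfl⟩) (EReal.coe_lt_top _)
    · intro h
      by_contra hc
      push_neg at hc
      have : {x | x ∈ X ∧ z - g x ∈ K} = ∅ := by
        ext x; simp only [Set.mem_setOf_eq, Set.mem_empty_iff_false, iff_false]
        rintro ⟨h1, h2⟩; exact hc x h1 h2
      rw [this, Set.image_empty, sInf_empty] at h
      exact absurd h (lt_irrefl _)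
  · -- lower semicontinuity
    intro z y hy
    obtain ⟨r, hyr, hrv⟩ := EReal.exists_between_coe_real hy
    set S : Set Z := g '' {x ∈ X | f x ≤ r} + K with hS
    have hScomp : IsCompact (g '' {x ∈ X | f x ≤ r}) :=
      (sublevel_compact hXcomp hflsc r).image_of_continuousOn
        (hgcont.mono (fun x hx => hx.1))
    have hSclosed : IsClosed S := IsClosed.add_left_of_isCompact hKclosed hScomp
    have hzS : z ∉ S := by
      rintro ⟨w, ⟨x, ⟨hxX, hxr⟩, rfl⟩, k, hk, rfl⟩
      have : v (g x + k) ≤ (f x : EReal) := by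
        rw [hv]
        exact sInf_le ⟨x, ⟨hxX, by simpa using hk⟩, rfl⟩
      exact absurd (this.trans (EReal.coe_le_coe_iff.2 hxr)) (not_le.2 hrv)
    have hmem : Sᶜ ∈ 𝓝 z := hSclosed.isOpen_compl.mem_nhds hzS
    filter_upwards [hmem] with z' hz'
    by_contra hle
    push_neg at hle
    -- then v z' ≤ y < r, so some feasible x with f x < r
    have hvz' : v z' < (r : EReal) := lt_of_le_of_lt hle hyr
    rw [hv z'] at hvz'
    obtain ⟨a, ⟨x, ⟨hxX, hxK⟩, rfl⟩, ha⟩ := sInf_lt_iff.1 hvz'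
    have hfx : f x ≤ r := le_of_lt (EReal.coe_lt_coe_iff.1 ha)
    exact hz' ⟨g x, ⟨x, ⟨hxX, hfx⟩, rfl⟩, z' - g x, hxK, by module⟩
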